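/- Let d, n ∈ ℕ, R > 0, ξ > 0, γ ∈ (0,1], and consider the hardmax self-attention dynamics with parameter matrix A = ξ I_d. Suppose the initial configuration x_1(0), …, x_n(0) ∈ ℝ^d consists of pairwise distinct vectors all lying on the hypersphere S_R = { x ∈ ℝ^d : ‖x‖ = R } (Euclidean norm). Then the initial configuration is an equilibrium: x_i(k) = x_i(0) for every i ∈ {1,…,n} and every k ≥ 0. -/

import Mathlib

open Filter Topology Matrix

open Classical in
/-- Hardmax cluster set: indices `j` where `⟨A x_i, x_j⟩` attains its maximum over the tuple. -/
noncomputable def cluster {d n : ℕ} (X : Fin n → (Fin d → ℝ))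
    (A : Matrix (Fin d) (Fin d) ℝ) (i : Fin n) : Finset (Fin n) :=
  Finset.univ.filter fun j => ∀ ℓ, A.mulVec (X i) ⬝ᵥ X ℓ ≤ A.mulVec (X i) ⬝ᵥ X j

/-- Hardmax self-attention dynamics:
`x_i(k+1) = (1−γ) x_i(k) + (γ/|C_i(X(k),A)|) Σ_{ℓ ∈ C_i(X(k),A)} x_ℓ(k)`. -/
noncomputable def traj {d n : ℕ} (γ : ℝ) (A : Matrix (Fin d) (Fin d) ℝ)
    (X0 : Fin n → (Fin d → ℝ)) : ℕ → Fin n → (Fin d → ℝ)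
  | 0 => X0
  | k + 1 => fun i =>
      (1 - γ) • traj γ A X0 k i +
        (γ / ((cluster (traj γ A X0 k) A i).card : ℝ)) •
          ∑ ℓ ∈ cluster (traj γ A X0 k) A i, traj γ A X0 k ℓ

/-- Euclidean norm on `ℝ^d` (viewed as `Fin d → ℝ`). -/
noncomputable def euclNorm {d : ℕ} (x : Fin d → ℝ) : ℝ :=
  Real.sqrt (∑ t, x t ^ 2)

/-- **No clustering** for hardmax self-attention dynamics with `A = ξ I_d`:
any configuration of pairwise distinct tokens on the hypersphere of radius `R`
is an equilibrium of the dynamics. -/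
theorem no_clustering {d n : ℕ} (R ξ γ : ℝ) (hR : 0 < R) (hξ : 0 < ξ)
    (hγ0 : 0 < γ) (hγ1 : γ ≤ 1)
    (X0 : Fin n → (Fin d → ℝ))
    (hinj : Function.Injective X0)
    (hsphere : ∀ i, euclNorm (X0 i) = R) :
    ∀ k : ℕ, ∀ i, traj γ (ξ • (1 : Matrix (Fin d) (Fin d) ℝ)) X0 k i = X0 i := by
  set A : Matrix (Fin d) (Fin d) ℝ := ξ • (1 : Matrix (Fin d) (Fin d) ℝ) with hA
  -- self dot product = R^2
  have hself : ∀ i, X0 i ⬝ᵥ X0 i = R ^ 2 := by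
    intro i
    have h := hsphere i
    unfold euclNorm at h
    have hnn : 0 ≤ ∑ t, X0 i t ^ 2 := Finset.sum_nonneg fun t _ => sq_nonneg _
    have : ∑ t, X0 i t ^ 2 = R ^ 2 := by
      have := congrArg (· ^ 2) h
      simpa [Real.sq_sqrt hnn] using this
    simpa [dotProduct, pow_two] using this
  have hlt : ∀ i j, j ≠ i → X0 i ⬝ᵥ X0 j < R ^ 2 := by
    intro i j hji
    have hne : X0 i ≠ X0 j := fun h => hji (hinj h).symm
    have hpos : 0 < ∑ t, (X0 i t - X0 j t) ^ 2 := by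
      have hnn : 0 ≤ ∑ t, (X0 i t - X0 j t) ^ 2 :=
        Finset.sum_nonneg fun t _ => sq_nonneg _
      rcases hnn.lt_or_eq with h | h
      · exact h
      · exfalso
        apply hne
        funext t
        have := (Finset.sum_eq_zero_iff_of_nonneg (fun t _ => sq_nonneg (X0 i t - X0 j t))).mp h.symm t (Finset.mem_univ t)
        have := pow_eq_zero_iff (n := 2) (by norm_num) |>.mp this
        linarith
    have hexp : ∑ t, (X0 i t - X0 j t) ^ 2
        = (X0 i ⬝ᵥ X0 i) + (X0 j ⬝ᵥ X0 j) - 2 * (X0 i ⬝ᵥ X0 j) := by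
      simp only [dotProduct]
      rw [Finset.mul_sum, ← Finset.sum_add_distrib, ← Finset.sum_sub_distrib]
      exact Finset.sum_congr rfl fun t _ => by ring
    rw [hexp, hself i, hself j] at hpos
    linarith
  -- dot with A
  have hAdot : ∀ x y : Fin d → ℝ, A.mulVec x ⬝ᵥ y = ξ * (x ⬝ᵥ y) := by
    intro x y
    rw [hA, Matrix.smul_mulVec, Matrix.one_mulVec, smul_dotProduct, smul_eq_mul]
  -- cluster is {i}
  have hcl : ∀ i, cluster X0 A i = {i} := by
    intro i
    ext j
    simp only [cluster, Finset.mem_filter, Finset.mem_univ, true_and, Finset.mem_singleton]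
    constructor
    · intro h
      by_contra hji
      have := h i
      rw [hAdot, hAdot, hself i] at this
      have hlt' := hlt i j hji
      nlinarith
    · intro hji ℓ
      subst hji
      rw [hAdot, hAdot, hself j]
      by_cases hℓ : ℓ = j
      · subst hℓ; rw [hself ℓ]
      · have := hlt j ℓ hℓ
        nlinarith
  intro k
  induction k with
  | zero => intro i; rfl
  | succ k ih =>
    intro i
    have hX : traj γ A X0 k = X0 := funext ih
    show (1 - γ) • traj γ A X0 k i +
        (γ / ((cluster (traj γ A X0 k) A i).card : ℝ)) •
          ∑ ℓ ∈ cluster (traj γ A X0 k) A i, traj γ A X0 k ℓ = X0 i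
    rw [hX, hcl i]
    simp
    funext t
    simp [Pi.smul_apply, smul_eq_mul]
    ring
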